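/- Every nonzero homogeneous polynomial g of degree 3 in two variables u, v over ℂ is equivalent under the action of GL(2, ℂ) (by linear substitution of the variables) to a nonzero scalar multiple of exactly one of the three normal forms uv² − u³, u²v − u³, and v³; that is, there exist an invertible 2×2 complex matrix M and a nonzero c ∈ ℂ such that substituting (u, v) ↦ M·(u, v) in g yields c·(uv² − u³), c·(u²v − u³), or c·v³, according to whether g has three distinct roots, one double and one simple root, or a triple root in ℂP¹. -/

import Mathlib

open MvPolynomial
open scoped Polynomial

lemma cubicFactor (a b c d : ℂ) (ha : a ≠ 0) :
    ∃ r1 r2 r3 : ℂ, ∀ t : ℂ, a*t^3 + b*t^2 + c*t + d = a*(t - r1)*(t - r2)*(t - r3) := by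
  set P : ℂ[X] := Polynomial.C a * Polynomial.X^3 + Polynomial.C b * Polynomial.X^2 + Polynomial.C c * Polynomial.X + Polynomial.C d with hP
  have hsp : P.Splits := IsAlgClosed.splits P
  have hcard : P.roots.card = 3 := by
    rw [Polynomial.splits_iff_card_roots.mp hsp, hP, Polynomial.natDegree_cubic ha]
  obtain ⟨r1, r2, r3, hr⟩ := Multiset.card_eq_three.mp hcard
  have hfac := Polynomial.Splits.eq_prod_roots hsp
  rw [hr] at hfac
  have hlc : P.leadingCoeff = a := Polynomial.leadingCoeff_cubic ha
  refine ⟨r1, r2, r3, fun t => ?_⟩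
  have := congrArg (Polynomial.eval t) hfac
  rw [hlc] at this; simp [hP] at this
  rw [show (a*t^3 + b*t^2 + c*t + d : ℂ) = Polynomial.eval t P by simp [hP]]
  simp [hP]; linear_combination this

lemma quadFactor (a b c : ℂ) (ha : a ≠ 0) :
    ∃ r1 r2 : ℂ, ∀ t : ℂ, a*t^2 + b*t + c = a*(t - r1)*(t - r2) := by
  set P : ℂ[X] := Polynomial.C a * Polynomial.X^2 + Polynomial.C b * Polynomial.X + Polynomial.C c with hP
  have hsp : P.Splits := IsAlgClosed.splits P
  have hcard : P.roots.card = 2 := by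
    rw [Polynomial.splits_iff_card_roots.mp hsp, hP, Polynomial.natDegree_quadratic ha]
  obtain ⟨r1, r2, hr⟩ := Multiset.card_eq_two.mp hcard
  have hfac := Polynomial.Splits.eq_prod_roots hsp
  rw [hr] at hfac
  have hlc : P.leadingCoeff = a := Polynomial.leadingCoeff_quadratic ha
  refine ⟨r1, r2, fun t => ?_⟩
  have := congrArg (Polynomial.eval t) hfac
  rw [hlc] at this; simp [hP] at this
  rw [show (a*t^2 + b*t + c : ℂ) = Polynomial.eval t P by simp [hP]]
  simp [hP]; linear_combination this

lemma finsupp_deg2 (m : Fin 2 →₀ ℕ) : m.degree = m 0 + m 1 := by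
  rw [Finsupp.degree_eq_sum, Fin.sum_univ_two]

lemma rep (g : MvPolynomial (Fin 2) ℂ) (hg3 : g.IsHomogeneous 3) :
    g = C (coeff (Finsupp.single 0 3) g) * X 0 ^ 3
      + C (coeff (Finsupp.single 0 2 + Finsupp.single 1 1) g) * (X 0 ^ 2 * X 1)
      + C (coeff (Finsupp.single 0 1 + Finsupp.single 1 2) g) * (X 0 * X 1 ^ 2)
      + C (coeff (Finsupp.single 1 3) g) * X 1 ^ 3 := by
  have hX : ∀ (n : Fin 2) (e : ℕ) (a : ℂ), C a * X n ^ e = monomial (Finsupp.single n e) a :=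
    fun n e a => C_mul_X_pow_eq_monomial
  ext m
  have hrhs : ∀ (n : Fin 2 →₀ ℕ) (a : ℂ), coeff m (monomial n a) = if n = m then a else 0 :=
    fun n a => coeff_monomial m n a
  rw [coeff_add, coeff_add, coeff_add, hX,
    show (C (coeff (Finsupp.single 0 2 + Finsupp.single 1 1) g) * (X 0 ^ 2 * X 1) :
        MvPolynomial (Fin 2) ℂ) = monomial (Finsupp.single 0 2 + Finsupp.single 1 1)
        (coeff (Finsupp.single 0 2 + Finsupp.single 1 1) g) by
      rw [← mul_assoc, hX, ← pow_one (X 1 : MvPolynomial (Fin 2) ℂ), X_pow_eq_monomial,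
        monomial_mul, mul_one],
    show (C (coeff (Finsupp.single 0 1 + Finsupp.single 1 2) g) * (X 0 * X 1 ^ 2) :
        MvPolynomial (Fin 2) ℂ) = monomial (Finsupp.single 0 1 + Finsupp.single 1 2)
        (coeff (Finsupp.single 0 1 + Finsupp.single 1 2) g) by
      rw [← mul_assoc, ← pow_one (X 0 : MvPolynomial (Fin 2) ℂ), hX, X_pow_eq_monomial,
        monomial_mul, mul_one],
    hX, hrhs, hrhs, hrhs, hrhs]
  by_cases hs : m 0 + m 1 = 3
  · have hext : ∀ (n : Fin 2 →₀ ℕ), m 0 = n 0 → m 1 = n 1 → m = n := by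
      intro n h1 h2; ext x; fin_cases x
      · exact h1
      · exact h2
    have hm : m = Finsupp.single 0 3 ∨ m = Finsupp.single 0 2 + Finsupp.single 1 1 ∨
        m = Finsupp.single 0 1 + Finsupp.single 1 2 ∨ m = Finsupp.single 1 3 := by
      have h0 : m 0 = 0 ∨ m 0 = 1 ∨ m 0 = 2 ∨ m 0 = 3 := by omega
      rcases h0 with h|h|h|h
      · exact Or.inr (Or.inr (Or.inr (hext _ (by simp [h]) (by simp; omega))))
      · exact Or.inr (Or.inr (Or.inl (hext _ (by simp [h]) (by simp; omega))))
      · exact Or.inr (Or.inl (hext _ (by simp [h]) (by simp; omega)))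
      · exact Or.inl (hext _ (by simp [h]) (by simp; omega))
    have hd : ∀ (n n' : Fin 2 →₀ ℕ), n 1 ≠ n' 1 → n = n' → False :=
      fun n n' h hh => h (by rw [hh])
    rcases hm with rfl|rfl|rfl|rfl
    · rw [if_pos rfl, if_neg (hd _ _ (by simp)), if_neg (hd _ _ (by simp)),
        if_neg (hd _ _ (by simp))]; ring
    · rw [if_pos rfl, if_neg (hd _ _ (by simp)), if_neg (hd _ _ (by simp)),
        if_neg (hd _ _ (by simp))]; ring
    · rw [if_pos rfl, if_neg (hd _ _ (by simp)), if_neg (hd _ _ (by simp)),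
        if_neg (hd _ _ (by simp))]; ring
    · rw [if_pos rfl, if_neg (hd _ _ (by simp)), if_neg (hd _ _ (by simp)),
        if_neg (hd _ _ (by simp))]; ring
  · rw [hg3.coeff_eq_zero (by rw [finsupp_deg2]; exact hs),
      if_neg (fun h => hs (by rw [← h]; simp)), if_neg (fun h => hs (by rw [← h]; simp)),
      if_neg (fun h => hs (by rw [← h]; simp)), if_neg (fun h => hs (by rw [← h]; simp))]
    simp

lemma evalBind (M : Matrix (Fin 2) (Fin 2) ℂ) (g : MvPolynomial (Fin 2) ℂ) (x : Fin 2 → ℂ) :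
    eval x (bind₁ (fun i => ∑ j, C (M i j) * X j) g)
      = eval (fun i => M i 0 * x 0 + M i 1 * x 1) g := by
  have h : ∀ (y : Fin 2 → ℂ) (p : MvPolynomial (Fin 2) ℂ), aeval y p = eval y p := fun y p => by
    rw [aeval_def, eval]; rfl
  rw [← h, aeval_bind₁]
  rw [show (fun i => aeval x ((fun i => ∑ j, C (M i j) * X j) i)) = fun i => M i 0 * x 0 + M i 1 * x 1 by
    funext i; simp [Fin.sum_univ_two]]
  exact h _ g

noncomputable def Ef : Fin 3 → ℂ → ℂ → ℂ :=
  ![fun x y => x*y^2 - x^3, fun x y => x^2*y - x^3, fun x y => y^3]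

lemma mkGL (p q r s t00 t01 t10 t11 : ℂ) (hD : p*s - q*r ≠ 0) (hT : t00*t11 - t01*t10 ≠ 0) :
    ∃ M : GL (Fin 2) ℂ, ∀ x y : ℂ,
      (p*((M : Matrix (Fin 2) (Fin 2) ℂ) 0 0*x + (M : Matrix (Fin 2) (Fin 2) ℂ) 0 1*y)
        + q*((M : Matrix (Fin 2) (Fin 2) ℂ) 1 0*x + (M : Matrix (Fin 2) (Fin 2) ℂ) 1 1*y)
        = t00*x + t01*y)
      ∧ (r*((M : Matrix (Fin 2) (Fin 2) ℂ) 0 0*x + (M : Matrix (Fin 2) (Fin 2) ℂ) 0 1*y)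
        + s*((M : Matrix (Fin 2) (Fin 2) ℂ) 1 0*x + (M : Matrix (Fin 2) (Fin 2) ℂ) 1 1*y)
        = t10*x + t11*y) := by
  set D := p*s - q*r with hDdef
  set A : Matrix (Fin 2) (Fin 2) ℂ :=
    !![(s*t00 - q*t10)/D, (s*t01 - q*t11)/D; (p*t10 - r*t00)/D, (p*t11 - r*t01)/D] with hA
  have hdet : A.det = (t00*t11 - t01*t10)/D := by
    rw [hA, Matrix.det_fin_two_of]
    field_simp
    ring
  have hU : IsUnit A := (Matrix.isUnit_iff_isUnit_det A).mpr
    (by rw [hdet]; exact (isUnit_iff_ne_zero).mpr (div_ne_zero hT hD))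
  refine ⟨hU.unit, fun x y => ?_⟩
  have hcoe : ((hU.unit : GL (Fin 2) ℂ) : Matrix (Fin 2) (Fin 2) ℂ) = A := hU.unit_spec
  rw [hcoe, hA]
  simp only [Matrix.of_apply, Matrix.cons_val', Matrix.cons_val_zero, Matrix.empty_val',
    Matrix.cons_val_fin_one, Matrix.cons_val_one, Matrix.head_cons, Matrix.head_fin_const]
  constructor
  · field_simp
    ring
  · field_simp
    ring

lemma prop_of (p1 q1 p2 q2 : ℂ) (h1 : p1 ≠ 0 ∨ q1 ≠ 0) (h2 : p2 ≠ 0 ∨ q2 ≠ 0)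
    (h : p1*q2 - p2*q1 = 0) : ∃ s : ℂ, s ≠ 0 ∧ p2 = s*p1 ∧ q2 = s*q1 := by
  rcases h1 with hp | hq
  · have hp2 : p2 ≠ 0 := by
      rintro rfl
      have hq2 : q2 = 0 := by
        have h' : p1*q2 = 0 := by linear_combination h
        exact (mul_eq_zero.mp h').resolve_left hp
      rcases h2 with h'|h' <;> simp_all
    refine ⟨p2/p1, div_ne_zero hp2 hp, by field_simp, ?_⟩
    rw [div_mul_eq_mul_div, eq_div_iff hp]
    linear_combination h
  · have hq2 : q2 ≠ 0 := by
      rintro rfl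
      have hp2 : p2 = 0 := by
        have h' : p2*q1 = 0 := by linear_combination -h
        rcases mul_eq_zero.mp h' with h''|h''
        · exact h''
        · exact absurd h'' hq
      rcases h2 with h'|h' <;> simp_all
    refine ⟨q2/q1, div_ne_zero hq2 hq, ?_, by field_simp⟩
    rw [div_mul_eq_mul_div, eq_div_iff hq]
    linear_combination -h

lemma exist_k (e p1 q1 p2 q2 p3 q3 : ℂ) (he : e ≠ 0)
    (h1 : p1 ≠ 0 ∨ q1 ≠ 0) (h2 : p2 ≠ 0 ∨ q2 ≠ 0) (h3 : p3 ≠ 0 ∨ q3 ≠ 0) :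
    ∃ (M : GL (Fin 2) ℂ) (c : ℂ) (k : Fin 3), c ≠ 0 ∧ ∀ x y : ℂ,
      e * (p1*((M : Matrix (Fin 2) (Fin 2) ℂ) 0 0*x + (M : Matrix (Fin 2) (Fin 2) ℂ) 0 1*y)
            + q1*((M : Matrix (Fin 2) (Fin 2) ℂ) 1 0*x + (M : Matrix (Fin 2) (Fin 2) ℂ) 1 1*y))
        * (p2*((M : Matrix (Fin 2) (Fin 2) ℂ) 0 0*x + (M : Matrix (Fin 2) (Fin 2) ℂ) 0 1*y)
            + q2*((M : Matrix (Fin 2) (Fin 2) ℂ) 1 0*x + (M : Matrix (Fin 2) (Fin 2) ℂ) 1 1*y))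
        * (p3*((M : Matrix (Fin 2) (Fin 2) ℂ) 0 0*x + (M : Matrix (Fin 2) (Fin 2) ℂ) 0 1*y)
            + q3*((M : Matrix (Fin 2) (Fin 2) ℂ) 1 0*x + (M : Matrix (Fin 2) (Fin 2) ℂ) 1 1*y))
        = c * Ef k x y := by
  by_cases h12 : p1*q2 - p2*q1 = 0
  · obtain ⟨s, hs, hp2, hq2⟩ := prop_of p1 q1 p2 q2 h1 h2 h12
    by_cases h13 : p1*q3 - p3*q1 = 0
    · -- triple line : k = 2
      obtain ⟨s', hs', hp3, hq3⟩ := prop_of p1 q1 p3 q3 h1 h3 h13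
      obtain ⟨r', s'', hD⟩ : ∃ r' s'', p1*s'' - q1*r' ≠ 0 := by
        rcases h1 with h|h
        · exact ⟨0, 1, by simpa⟩
        · exact ⟨1, 0, by simpa⟩
      obtain ⟨M, hM⟩ := mkGL p1 q1 r' s'' 0 1 1 0 hD (by norm_num)
      refine ⟨M, e*s*s', 2, by simp [he, hs, hs'], fun x y => ?_⟩
      obtain ⟨hM1, hM2⟩ := hM x y
      have hE2 : p2*((M : Matrix (Fin 2) (Fin 2) ℂ) 0 0*x + (M : Matrix (Fin 2) (Fin 2) ℂ) 0 1*y)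
          + q2*((M : Matrix (Fin 2) (Fin 2) ℂ) 1 0*x + (M : Matrix (Fin 2) (Fin 2) ℂ) 1 1*y)
          = s*y := by
        rw [hp2, hq2]; linear_combination s*hM1
      have hE3 : p3*((M : Matrix (Fin 2) (Fin 2) ℂ) 0 0*x + (M : Matrix (Fin 2) (Fin 2) ℂ) 0 1*y)
          + q3*((M : Matrix (Fin 2) (Fin 2) ℂ) 1 0*x + (M : Matrix (Fin 2) (Fin 2) ℂ) 1 1*y)
          = s'*y := by
        rw [hp3, hq3]; linear_combination s'*hM1
      rw [hM1, hE2, hE3]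
      simp only [Ef, Matrix.cons_val_two, Matrix.tail_cons, Matrix.head_cons]
      ring
    · -- double line ℓ1, simple ℓ3 : k = 1
      obtain ⟨M, hM⟩ := mkGL p1 q1 p3 q3 1 0 (-1) 1 (by intro hh; exact h13 (by linear_combination hh)) (by norm_num)
      refine ⟨M, e*s, 1, by simp [he, hs], fun x y => ?_⟩
      obtain ⟨hM1, hM2⟩ := hM x y
      have hE2 : p2*((M : Matrix (Fin 2) (Fin 2) ℂ) 0 0*x + (M : Matrix (Fin 2) (Fin 2) ℂ) 0 1*y)
          + q2*((M : Matrix (Fin 2) (Fin 2) ℂ) 1 0*x + (M : Matrix (Fin 2) (Fin 2) ℂ) 1 1*y)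
          = s*x := by
        rw [hp2, hq2]; linear_combination s*hM1
      rw [hM1, hE2, hM2]
      simp only [Ef, Matrix.cons_val_one, Matrix.head_cons, Matrix.cons_val_zero]
      ring
  · by_cases h13 : p1*q3 - p3*q1 = 0
    · -- double line ℓ1 (= ℓ3 dir), simple ℓ2 : k = 1
      obtain ⟨s, hs, hp3, hq3⟩ := prop_of p1 q1 p3 q3 h1 h3 h13
      obtain ⟨M, hM⟩ := mkGL p1 q1 p2 q2 1 0 (-1) 1 (by intro hh; exact h12 (by linear_combination hh)) (by norm_num)
      refine ⟨M, e*s, 1, by simp [he, hs], fun x y => ?_⟩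
      obtain ⟨hM1, hM2⟩ := hM x y
      have hE3 : p3*((M : Matrix (Fin 2) (Fin 2) ℂ) 0 0*x + (M : Matrix (Fin 2) (Fin 2) ℂ) 0 1*y)
          + q3*((M : Matrix (Fin 2) (Fin 2) ℂ) 1 0*x + (M : Matrix (Fin 2) (Fin 2) ℂ) 1 1*y)
          = s*x := by
        rw [hp3, hq3]; linear_combination s*hM1
      rw [hM1, hE3, hM2]
      simp only [Ef, Matrix.cons_val_one, Matrix.head_cons, Matrix.cons_val_zero]
      ring
    · by_cases h23 : p2*q3 - p3*q2 = 0
      · -- double line ℓ2 (= ℓ3 dir), simple ℓ1 : k = 1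
        obtain ⟨s, hs, hp3, hq3⟩ := prop_of p2 q2 p3 q3 h2 h3 h23
        obtain ⟨M, hM⟩ := mkGL p2 q2 p1 q1 1 0 (-1) 1
          (by intro hh; exact h12 (by linear_combination -hh)) (by norm_num)
        refine ⟨M, e*s, 1, by simp [he, hs], fun x y => ?_⟩
        obtain ⟨hM1, hM2⟩ := hM x y
        have hE3 : p3*((M : Matrix (Fin 2) (Fin 2) ℂ) 0 0*x + (M : Matrix (Fin 2) (Fin 2) ℂ) 0 1*y)
            + q3*((M : Matrix (Fin 2) (Fin 2) ℂ) 1 0*x + (M : Matrix (Fin 2) (Fin 2) ℂ) 1 1*y)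
            = s*x := by
          rw [hp3, hq3]; linear_combination s*hM1
        rw [hM1, hE3, hM2]
        simp only [Ef, Matrix.cons_val_one, Matrix.head_cons, Matrix.cons_val_zero]
        ring
      · -- three distinct lines : k = 0
        set α := p3*q2 - p2*q3 with hα
        set β := p1*q3 - p3*q1 with hβ
        have hαne : α ≠ 0 := fun hh => h23 (by rw [hα] at hh; linear_combination -hh)
        have hβne : β ≠ 0 := h13
        have h2ne : (2:ℂ) ≠ 0 := two_ne_zero
        obtain ⟨M, hM⟩ := mkGL p1 q1 p2 q2 (2*β) 0 (-α) α
          (by intro hh; exact h12 (by linear_combination hh))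
          (by intro hh
              have h2' : (2:ℂ)*β*α = 0 := by linear_combination hh
              rcases mul_eq_zero.mp h2' with h'|h'
              · rcases mul_eq_zero.mp h' with h''|h''
                · exact h2ne h''
                · exact hβne h''
              · exact hαne h')
        refine ⟨M, 2*e*α^2*β^2/(p1*q2 - p2*q1), 0, ?_, fun x y => ?_⟩
        · exact div_ne_zero (mul_ne_zero (mul_ne_zero (mul_ne_zero h2ne he)
            (pow_ne_zero 2 hαne)) (pow_ne_zero 2 hβne)) h12
        obtain ⟨hM1, hM2⟩ := hM x y
        have hp3' : (p1*q2 - p2*q1)*p3 = α*p1 + β*p2 := by rw [hα, hβ]; ring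
        have hq3' : (p1*q2 - p2*q1)*q3 = α*q1 + β*q2 := by rw [hα, hβ]; ring
        have hE3 : p3*((M : Matrix (Fin 2) (Fin 2) ℂ) 0 0*x + (M : Matrix (Fin 2) (Fin 2) ℂ) 0 1*y)
            + q3*((M : Matrix (Fin 2) (Fin 2) ℂ) 1 0*x + (M : Matrix (Fin 2) (Fin 2) ℂ) 1 1*y)
            = α*β/(p1*q2 - p2*q1) * (x + y) := by
          rw [div_mul_eq_mul_div, eq_div_iff h12]
          linear_combination α*hM1 + β*hM2
            + ((M : Matrix (Fin 2) (Fin 2) ℂ) 0 0*x + (M : Matrix (Fin 2) (Fin 2) ℂ) 0 1*y)*hp3'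
            + ((M : Matrix (Fin 2) (Fin 2) ℂ) 1 0*x + (M : Matrix (Fin 2) (Fin 2) ℂ) 1 1*y)*hq3'
        rw [hM1, hE3, hM2]
        simp only [Ef, Matrix.cons_val_zero]
        field_simp
        ring

lemma U02 (c c' C D : ℂ) (hc : c ≠ 0) (hc' : c' ≠ 0)
    (h : ∀ x y : ℂ, c' * (x*y^2 - x^3) = c * (C*x+D*y)^3) : False := by
  have hD3 : c * D^3 = 0 := by linear_combination -(h 0 1)
  have hD : D = 0 := by
    have := (mul_eq_zero.mp hD3).resolve_left hc
    exact pow_eq_zero_iff (by norm_num) |>.mp this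
  subst hD
  have hC3 : c * C^3 = 0 := by linear_combination -(h 1 1)
  have hC : C = 0 := by
    have := (mul_eq_zero.mp hC3).resolve_left hc
    exact pow_eq_zero_iff (by norm_num) |>.mp this
  subst hC
  have h3 : c' * 3 = 0 := by linear_combination h 1 2
  rcases mul_eq_zero.mp h3 with h'|h'
  · exact hc' h'
  · norm_num at h'

lemma U12 (c c' C D : ℂ) (hc : c ≠ 0) (hc' : c' ≠ 0)
    (h : ∀ x y : ℂ, c' * (x^2*y - x^3) = c * (C*x+D*y)^3) : False := by
  have hD3 : c * D^3 = 0 := by linear_combination -(h 0 1)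
  have hD : D = 0 := by
    have := (mul_eq_zero.mp hD3).resolve_left hc
    exact pow_eq_zero_iff (by norm_num) |>.mp this
  subst hD
  have hC3 : c * C^3 = 0 := by linear_combination -(h 1 1)
  have hC : C = 0 := by
    have := (mul_eq_zero.mp hC3).resolve_left hc
    exact pow_eq_zero_iff (by norm_num) |>.mp this
  subst hC
  have h3 : c' * 1 = 0 := by linear_combination h 1 2
  rcases mul_eq_zero.mp h3 with h'|h'
  · exact hc' h'
  · norm_num at h'

lemma U01 (c c' A B C D : ℂ) (hc : c ≠ 0) (hc' : c' ≠ 0)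
    (h : ∀ x y : ℂ, c' * (x*y^2 - x^3)
        = c * ((A*x+B*y)^2*(C*x+D*y) - (A*x+B*y)^3)) : False := by
  have z1 : B^2*(D-B) = 0 :=
    (mul_eq_zero.mp (show c * (B^2*(D-B)) = 0 by linear_combination -(h 0 1))).resolve_left hc
  have z2 : (A+B)^2*((C+D)-(A+B)) = 0 :=
    (mul_eq_zero.mp (show c * ((A+B)^2*((C+D)-(A+B))) = 0 by
      linear_combination -(h 1 1))).resolve_left hc
  have z3 : (A-B)^2*((C-D)-(A-B)) = 0 :=
    (mul_eq_zero.mp (show c * ((A-B)^2*((C-D)-(A-B))) = 0 by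
      linear_combination -(h 1 (-1)))).resolve_left hc
  have sq : ∀ t : ℂ, t^2 = 0 → t = 0 := fun t ht => pow_eq_zero_iff (by norm_num) |>.mp ht
  have key : (A = 0 ∧ B = 0) ∨ (C = A ∧ D = B) := by
    rcases mul_eq_zero.mp z1 with w1|w1 <;> rcases mul_eq_zero.mp z2 with w2|w2 <;>
      rcases mul_eq_zero.mp z3 with w3|w3
    · exact Or.inl ⟨by linear_combination sq _ w2 - sq _ w1, sq _ w1⟩
    · exact Or.inl ⟨by linear_combination sq _ w2 - sq _ w1, sq _ w1⟩
    · exact Or.inl ⟨by linear_combination sq _ w3 + sq _ w1, sq _ w1⟩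
    · exact Or.inr ⟨by linear_combination (w2 + w3)/2, by linear_combination (w2 - w3)/2⟩
    · exact Or.inl ⟨by linear_combination (sq _ w2 + sq _ w3)/2,
        by linear_combination (sq _ w2 - sq _ w3)/2⟩
    · exact Or.inr ⟨by linear_combination w3 + w1, by linear_combination w1⟩
    · exact Or.inr ⟨by linear_combination w2 - w1, by linear_combination w1⟩
    · exact Or.inr ⟨by linear_combination (w2 + w3)/2, by linear_combination (w2 - w3)/2⟩
  have h3 : c' * 3 = 0 := by
    rcases key with ⟨hA, hB⟩ | ⟨hC, hD⟩
    · subst hA; subst hB; linear_combination h 1 2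
    · subst hC; subst hD; linear_combination h 1 2
  rcases mul_eq_zero.mp h3 with h'|h'
  · exact hc' h'
  · norm_num at h'

lemma factor (a b c d : ℂ) (h : ¬(a = 0 ∧ b = 0 ∧ c = 0 ∧ d = 0)) :
    ∃ e p1 q1 p2 q2 p3 q3 : ℂ, e ≠ 0 ∧ (p1 ≠ 0 ∨ q1 ≠ 0) ∧ (p2 ≠ 0 ∨ q2 ≠ 0)
      ∧ (p3 ≠ 0 ∨ q3 ≠ 0) ∧ ∀ x y : ℂ,
      a*x^3 + b*(x^2*y) + c*(x*y^2) + d*y^3 = e*(p1*x+q1*y)*(p2*x+q2*y)*(p3*x+q3*y) := by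
  by_cases ha : a = 0
  · by_cases hb : b = 0
    · by_cases hc : c = 0
      · have hd : d ≠ 0 := fun hd => h ⟨ha, hb, hc, hd⟩
        exact ⟨d, 0, 1, 0, 1, 0, 1, hd, Or.inr one_ne_zero, Or.inr one_ne_zero,
          Or.inr one_ne_zero, fun x y => by rw [ha, hb, hc]; ring⟩
      · exact ⟨1, 0, 1, 0, 1, c, d, one_ne_zero, Or.inr one_ne_zero, Or.inr one_ne_zero,
          Or.inl hc, fun x y => by rw [ha, hb]; ring⟩
    · obtain ⟨r1, r2, hq⟩ := quadFactor b c d hb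
      refine ⟨b, 0, 1, 1, -r1, 1, -r2, hb, Or.inr one_ne_zero, Or.inl one_ne_zero,
        Or.inl one_ne_zero, fun x y => ?_⟩
      rcases eq_or_ne y 0 with rfl | hy
      · rw [ha]; ring
      · have h2 := hq (x/y)
        field_simp at h2
        rw [ha]
        apply mul_left_cancel₀ (pow_ne_zero 2 hy)
        linear_combination y^3 * h2
  · obtain ⟨r1, r2, r3, hq⟩ := cubicFactor a b c d ha
    refine ⟨a, 1, -r1, 1, -r2, 1, -r3, ha, Or.inl one_ne_zero, Or.inl one_ne_zero,
      Or.inl one_ne_zero, fun x y => ?_⟩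
    rcases eq_or_ne y 0 with rfl | hy
    · ring
    · have h3 := hq (x/y)
      field_simp at h3
      apply mul_left_cancel₀ (pow_ne_zero 6 hy)
      linear_combination y^6 * h3

noncomputable def NF : Fin 3 → MvPolynomial (Fin 2) ℂ :=
  ![X 0 * X 1 ^ 2 - X 0 ^ 3, X 0 ^ 2 * X 1 - X 0 ^ 3, X 1 ^ 3]

lemma evalNF (k : Fin 3) (c : ℂ) (x : Fin 2 → ℂ) :
    eval x (c • NF k) = c * Ef k (x 0) (x 1) := by
  fin_cases k <;> (simp [NF, Ef, MvPolynomial.smul_eval]; try ring)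

lemma uniq (k k' : Fin 3)
    (H : ∃ (P : Matrix (Fin 2) (Fin 2) ℂ) (c c' : ℂ), c ≠ 0 ∧ c' ≠ 0 ∧ ∀ x y : ℂ,
      c' * Ef k' x y = c * Ef k (P 0 0*x + P 0 1*y) (P 1 0*x + P 1 1*y))
    (H' : ∃ (P : Matrix (Fin 2) (Fin 2) ℂ) (c c' : ℂ), c ≠ 0 ∧ c' ≠ 0 ∧ ∀ x y : ℂ,
      c' * Ef k x y = c * Ef k' (P 0 0*x + P 0 1*y) (P 1 0*x + P 1 1*y)) :
    k' = k := by
  fin_cases k <;> fin_cases k' <;> (try rfl)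
  · -- k = 0, k' = 1 : use H'
    obtain ⟨P, c, c', hc, hc', hE⟩ := H'
    exact absurd (fun x y : ℂ => by simpa [Ef] using hE x y) fun hh =>
      U01 c c' (P 0 0) (P 0 1) (P 1 0) (P 1 1) hc hc' hh
  · -- k = 0, k' = 2 : use H'
    obtain ⟨P, c, c', hc, hc', hE⟩ := H'
    exact absurd (fun x y : ℂ => by simpa [Ef] using hE x y) fun hh =>
      U02 c c' (P 1 0) (P 1 1) hc hc' hh
  · -- k = 1, k' = 0 : use H
    obtain ⟨P, c, c', hc, hc', hE⟩ := H
    exact absurd (fun x y : ℂ => by simpa [Ef] using hE x y) fun hh =>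
      U01 c c' (P 0 0) (P 0 1) (P 1 0) (P 1 1) hc hc' hh
  · -- k = 1, k' = 2 : use H'
    obtain ⟨P, c, c', hc, hc', hE⟩ := H'
    exact absurd (fun x y : ℂ => by simpa [Ef] using hE x y) fun hh =>
      U12 c c' (P 1 0) (P 1 1) hc hc' hh
  · -- k = 2, k' = 0 : use H
    obtain ⟨P, c, c', hc, hc', hE⟩ := H
    exact absurd (fun x y : ℂ => by simpa [Ef] using hE x y) fun hh =>
      U02 c c' (P 1 0) (P 1 1) hc hc' hh
  · -- k = 2, k' = 1 : use H
    obtain ⟨P, c, c', hc, hc', hE⟩ := H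
    exact absurd (fun x y : ℂ => by simpa [Ef] using hE x y) fun hh =>
      U12 c c' (P 1 0) (P 1 1) hc hc' hh

theorem binary_cubic_normal_forms (g : MvPolynomial (Fin 2) ℂ)
    (hg3 : g.IsHomogeneous 3) (hg : g ≠ 0) :
    ∃! k : Fin 3,
      ∃ (M : GL (Fin 2) ℂ) (c : ℂ), c ≠ 0 ∧
        MvPolynomial.bind₁
          (fun i => ∑ j, MvPolynomial.C ((M : Matrix (Fin 2) (Fin 2) ℂ) i j) * X j) g =
        c • (![X 0 * X 1 ^ 2 - X 0 ^ 3,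
               X 0 ^ 2 * X 1 - X 0 ^ 3,
               X 1 ^ 3] : Fin 3 → MvPolynomial (Fin 2) ℂ) k := by
  obtain ⟨a, b, cc, d, hrepr⟩ : ∃ a b cc d : ℂ, g = C a * X 0 ^ 3 + C b * (X 0 ^ 2 * X 1)
      + C cc * (X 0 * X 1 ^ 2) + C d * X 1 ^ 3 := ⟨_, _, _, _, rep g hg3⟩
  have hG : ∀ x : Fin 2 → ℂ,
      eval x g = a*(x 0)^3 + b*((x 0)^2*(x 1)) + cc*((x 0)*(x 1)^2) + d*(x 1)^3 := fun x => by
    rw [hrepr]; simp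
  have habcd : ¬(a = 0 ∧ b = 0 ∧ cc = 0 ∧ d = 0) := by
    rintro ⟨rfl, rfl, rfl, rfl⟩; exact hg (by rw [hrepr]; simp)
  obtain ⟨e, p1, q1, p2, q2, p3, q3, he, h1, h2, h3, hfac⟩ := factor a b cc d habcd
  obtain ⟨M, c0, k, hc0, hMk⟩ := exist_k e p1 q1 p2 q2 p3 q3 he h1 h2 h3
  have keyEq : ∀ (M' : GL (Fin 2) ℂ) (c' : ℂ) (k' : Fin 3),
      (MvPolynomial.bind₁
          (fun i => ∑ j, MvPolynomial.C ((M' : Matrix (Fin 2) (Fin 2) ℂ) i j) * X j) g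
        = c' • NF k')
      ↔ ∀ x : Fin 2 → ℂ,
          eval (fun i => (M' : Matrix (Fin 2) (Fin 2) ℂ) i 0 * x 0
            + (M' : Matrix (Fin 2) (Fin 2) ℂ) i 1 * x 1) g = c' * Ef k' (x 0) (x 1) := by
    intro M' c' k'
    constructor
    · intro hh x
      rw [← evalBind, hh, evalNF]
    · intro hh
      apply MvPolynomial.funext
      intro x
      rw [evalBind, evalNF]
      exact hh x
  have hkk : ∀ x : Fin 2 → ℂ,
      eval (fun i => (M : Matrix (Fin 2) (Fin 2) ℂ) i 0 * x 0
        + (M : Matrix (Fin 2) (Fin 2) ℂ) i 1 * x 1) g = c0 * Ef k (x 0) (x 1) := by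
    intro x
    rw [hG, hfac]
    exact hMk (x 0) (x 1)
  have build : ∀ (N N' : GL (Fin 2) ℂ) (cN cN' : ℂ) (kN kN' : Fin 3), cN ≠ 0 → cN' ≠ 0 →
      (∀ x : Fin 2 → ℂ, eval (fun i => (N : Matrix (Fin 2) (Fin 2) ℂ) i 0 * x 0
          + (N : Matrix (Fin 2) (Fin 2) ℂ) i 1 * x 1) g = cN * Ef kN (x 0) (x 1)) →
      (∀ x : Fin 2 → ℂ, eval (fun i => (N' : Matrix (Fin 2) (Fin 2) ℂ) i 0 * x 0
          + (N' : Matrix (Fin 2) (Fin 2) ℂ) i 1 * x 1) g = cN' * Ef kN' (x 0) (x 1)) →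
      ∃ (P : Matrix (Fin 2) (Fin 2) ℂ) (c c' : ℂ), c ≠ 0 ∧ c' ≠ 0 ∧ ∀ x y : ℂ,
        c' * Ef kN' x y = c * Ef kN (P 0 0*x + P 0 1*y) (P 1 0*x + P 1 1*y) := by
    intro N N' cN cN' kN kN' hcN hcN' hN hN'
    set P : Matrix (Fin 2) (Fin 2) ℂ :=
      ((N⁻¹ : GL (Fin 2) ℂ) : Matrix (Fin 2) (Fin 2) ℂ) * (N' : Matrix (Fin 2) (Fin 2) ℂ)
      with hP
    have hone : (N : Matrix (Fin 2) (Fin 2) ℂ) * ((N⁻¹ : GL (Fin 2) ℂ) : Matrix (Fin 2) (Fin 2) ℂ)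
        = 1 := by
      calc (N : Matrix (Fin 2) (Fin 2) ℂ) * ((N⁻¹ : GL (Fin 2) ℂ) : Matrix (Fin 2) (Fin 2) ℂ)
          = ((N * N⁻¹ : GL (Fin 2) ℂ) : Matrix (Fin 2) (Fin 2) ℂ) := (Units.val_mul _ _).symm
        _ = 1 := by rw [mul_inv_cancel, Units.val_one]
    have hprod : (N : Matrix (Fin 2) (Fin 2) ℂ) * P = (N' : Matrix (Fin 2) (Fin 2) ℂ) := by
      rw [hP, ← Matrix.mul_assoc, hone, Matrix.one_mul]
    refine ⟨P, cN, cN', hcN, hcN', fun x y => ?_⟩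
    have hA := hN' ![x, y]
    have hB := hN ![P 0 0*x + P 0 1*y, P 1 0*x + P 1 1*y]
    simp only [Matrix.cons_val_zero, Matrix.cons_val_one, Matrix.head_cons] at hA hB
    rw [← hA, ← hB]
    refine congrArg (fun f => eval f g) (funext fun i => ?_)
    have hE0 : (N : Matrix (Fin 2) (Fin 2) ℂ) i 0 * P 0 0
        + (N : Matrix (Fin 2) (Fin 2) ℂ) i 1 * P 1 0 = (N' : Matrix (Fin 2) (Fin 2) ℂ) i 0 := by
      have := congrFun (congrFun hprod i) 0
      rw [Matrix.mul_apply, Fin.sum_univ_two] at this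
      exact this
    have hE1 : (N : Matrix (Fin 2) (Fin 2) ℂ) i 0 * P 0 1
        + (N : Matrix (Fin 2) (Fin 2) ℂ) i 1 * P 1 1 = (N' : Matrix (Fin 2) (Fin 2) ℂ) i 1 := by
      have := congrFun (congrFun hprod i) 1
      rw [Matrix.mul_apply, Fin.sum_univ_two] at this
      exact this
    linear_combination -x*hE0 - y*hE1
  refine ⟨k, ⟨M, c0, hc0, (keyEq M c0 k).mpr hkk⟩, ?_⟩
  rintro k' ⟨M', c0', hc0', hpk'⟩
  have hkk' := (keyEq M' c0' k').mp hpk'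
  exact uniq k k' (build M M' c0 c0' k k' hc0 hc0' hkk hkk')
    (build M' M c0' c0 k' k hc0' hc0 hkk' hkk)
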